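/- Let ψ : ℂ[y₀,y₁,y₂,y₃,y₄] → ℂ[x₀,x₁,x₂,x₃,x₄] be the ℂ-algebra homomorphism determined by ψ(y₀) = x₀, ψ(y₁) = x₁² − x₀x₂, ψ(y₂) = x₂² + (1/3)x₀x₄ − (4/3)x₁x₃, ψ(y₃) = x₁³ + (1/2)x₀²x₃ − (3/2)x₀x₁x₂, ψ(y₄) = x₂³ − 2x₁x₂x₃ + x₀x₃² + x₁²x₄ − x₀x₂x₄. Then the kernel of ψ is the principal ideal generated by 4y₃² − 4y₁³ − y₀³y₄ + 3y₀²y₁y₂. Consequently the image of ψ (the invariant ring of the ℂ⁺-action on Sym⁴(ℂ²)) is isomorphic to ℂ[y₀,…,y₄]/(4y₃² − 4y₁³ − y₀³y₄ + 3y₀²y₁y₂), the coordinate ring of a degree-6 hypersurface in the weighted projective space ℙ(1,2,2,3,3). -/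

import Mathlib

set_option maxHeartbeats 1000000
set_option synthInstance.maxHeartbeats 400000

open MvPolynomial

/-- The `ℂ`-algebra homomorphism `ψ : ℂ[y₀,y₁,y₂,y₃,y₄] → ℂ[x₀,x₁,x₂,x₃,x₄]` sending
`y₀ ↦ x₀`, `y₁ ↦ x₁² − x₀x₂`, `y₂ ↦ x₂² + (1/3)x₀x₄ − (4/3)x₁x₃`,
`y₃ ↦ x₁³ + (1/2)x₀²x₃ − (3/2)x₀x₁x₂`,
`y₄ ↦ x₂³ − 2x₁x₂x₃ + x₀x₃² + x₁²x₄ − x₀x₂x₄`. -/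
noncomputable def psi :
    MvPolynomial (Fin 5) ℂ →ₐ[ℂ] MvPolynomial (Fin 5) ℂ :=
  aeval ![X 0,
          X 1 ^ 2 - X 0 * X 2,
          X 2 ^ 2 + C (1 / 3 : ℂ) * X 0 * X 4 - C (4 / 3 : ℂ) * X 1 * X 3,
          X 1 ^ 3 + C (1 / 2 : ℂ) * X 0 ^ 2 * X 3 - C (3 / 2 : ℂ) * X 0 * X 1 * X 2,
          X 2 ^ 3 - C (2 : ℂ) * X 1 * X 2 * X 3 + X 0 * X 3 ^ 2 + X 1 ^ 2 * X 4
            - X 0 * X 2 * X 4]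

/-- The relation `4y₃² − 4y₁³ − y₀³y₄ + 3y₀²y₁y₂` among the five generators. -/
noncomputable def rel : MvPolynomial (Fin 5) ℂ :=
  C (4 : ℂ) * X 3 ^ 2 - C (4 : ℂ) * X 1 ^ 3 - X 0 ^ 3 * X 4
    + C (3 : ℂ) * X 0 ^ 2 * X 1 * X 2

/-! ### Auxiliary material -/

lemma prime_X0 : Prime (X (0 : Fin 5) : MvPolynomial (Fin 5) ℂ) := by
  rw [← MulEquiv.prime_iff (MvPolynomial.finSuccEquiv ℂ 4).toRingEquiv.toMulEquiv]
  simpa [MvPolynomial.finSuccEquiv_X_zero] using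
    (Polynomial.prime_X (R := MvPolynomial (Fin 4) ℂ))

lemma not_dvd_X0_rel : ¬ (X (0 : Fin 5) : MvPolynomial (Fin 5) ℂ) ∣ rel := by
  rintro ⟨h, hh⟩
  have := congrArg (eval ![0, 0, 0, 1, 0]) hh
  simp [rel] at this

/-- The restriction of `ψ` to the subring generated by `y₀, y₁, y₂, y₃`. -/
noncomputable def Pmap : MvPolynomial (Fin 4) ℂ →ₐ[ℂ] MvPolynomial (Fin 5) ℂ :=
  aeval ![X 0,
          X 1 ^ 2 - X 0 * X 2,
          X 2 ^ 2 + C (1 / 3 : ℂ) * X 0 * X 4 - C (4 / 3 : ℂ) * X 1 * X 3,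
          X 1 ^ 3 + C (1 / 2 : ℂ) * X 0 ^ 2 * X 3 - C (3 / 2 : ℂ) * X 0 * X 1 * X 2]

noncomputable abbrev Kfrac := FractionRing (MvPolynomial (Fin 4) ℂ)

noncomputable def sgen (i : Fin 4) : Kfrac := algebraMap (MvPolynomial (Fin 4) ℂ) Kfrac (X i)

lemma sgen_ne_zero (i : Fin 4) : sgen i ≠ 0 := by
  simp only [sgen, ne_eq,
    map_eq_zero_iff _ (IsFractionRing.injective (MvPolynomial (Fin 4) ℂ) Kfrac)]
  exact X_ne_zero i

/-- Explicit retraction: on the slice `x₁ = 0` (after localizing at `x₀`) the first four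
generators become coordinates. -/
noncomputable def chi : MvPolynomial (Fin 5) ℂ →ₐ[ℂ] Kfrac :=
  aeval ![sgen 0, 0, -(sgen 1) / sgen 0, 2 * sgen 3 / (sgen 0) ^ 2,
          (3 * sgen 2 - 3 * (sgen 1) ^ 2 / (sgen 0) ^ 2) / sgen 0]

lemma chi_comp_Pmap :
    chi.comp Pmap = IsScalarTower.toAlgHom ℂ (MvPolynomial (Fin 4) ℂ) Kfrac := by
  apply MvPolynomial.algHom_ext
  intro i
  have h0 := sgen_ne_zero 0
  fin_cases i <;> simp [chi, Pmap, sgen, algebraMap_eq, map_ofNat] <;> field_simp <;> ring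

lemma Pmap_injective : Function.Injective Pmap := by
  have h : Function.Injective (chi.comp Pmap) := by
    rw [chi_comp_Pmap]
    exact IsFractionRing.injective (MvPolynomial (Fin 4) ℂ) Kfrac
  exact fun a b hab => h (by simp [AlgHom.comp_apply, hab])

lemma elim_y4 (f : MvPolynomial (Fin 5) ℂ) :
    ∃ (N : ℕ) (q : MvPolynomial (Fin 5) ℂ) (g : MvPolynomial (Fin 4) ℂ),
      X 0 ^ N * f = q * rel + rename Fin.castSucc g := by
  induction f using MvPolynomial.induction_on with
  | C a => exact ⟨0, 0, C a, by simp⟩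
  | add f g hf hg =>
    obtain ⟨N₁, q₁, g₁, h₁⟩ := hf
    obtain ⟨N₂, q₂, g₂, h₂⟩ := hg
    refine ⟨N₁ + N₂, X 0 ^ N₂ * q₁ + X 0 ^ N₁ * q₂,
      X 0 ^ N₂ * g₁ + X 0 ^ N₁ * g₂, ?_⟩
    simp only [map_add, map_mul, map_pow, rename_X, Fin.castSucc_zero]
    linear_combination (X (0 : Fin 5) : MvPolynomial (Fin 5) ℂ) ^ N₂ * h₁ +
      (X (0 : Fin 5) : MvPolynomial (Fin 5) ℂ) ^ N₁ * h₂
  | mul_X f i hf =>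
    obtain ⟨N, q, g, ih⟩ := hf
    cases i using Fin.lastCases with
    | cast j =>
      refine ⟨N, q * X j.castSucc, g * X j, ?_⟩
      simp only [map_mul, rename_X]
      linear_combination ih * (X j.castSucc : MvPolynomial (Fin 5) ℂ)
    | last =>
      refine ⟨N + 3, X 0 ^ 3 * X 4 * q - rename Fin.castSucc g,
        g * (C (4 : ℂ) * X 3 ^ 2 - C (4 : ℂ) * X 1 ^ 3
          + C (3 : ℂ) * X 0 ^ 2 * X 1 * X 2), ?_⟩
      have c0 : (Fin.castSucc (0 : Fin 4)) = (0 : Fin 5) := rfl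
      have c1 : (Fin.castSucc (1 : Fin 4)) = (1 : Fin 5) := rfl
      have c2 : (Fin.castSucc (2 : Fin 4)) = (2 : Fin 5) := rfl
      have c3 : (Fin.castSucc (3 : Fin 4)) = (3 : Fin 5) := rfl
      have c4 : (Fin.last 4) = (4 : Fin 5) := rfl
      have hrel : rel = C (4 : ℂ) * X 3 ^ 2 - C (4 : ℂ) * X 1 ^ 3 - X 0 ^ 3 * X 4
          + C (3 : ℂ) * X 0 ^ 2 * X 1 * X 2 := rfl
      simp only [map_mul, map_sub, map_add, map_pow, rename_X, rename_C, c0, c1, c2, c3, c4]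
      linear_combination (X (0 : Fin 5) ^ 3 * X 4 : MvPolynomial (Fin 5) ℂ) * ih
        + rename Fin.castSucc g * hrel

lemma psi_rel : psi rel = 0 := by
  apply MvPolynomial.funext
  intro x
  simp only [psi, rel, map_add, map_sub, map_mul, map_pow, aeval_X, eval_C, eval_X,
    eval_mul, eval_add, eval_sub, eval_pow, map_zero, aeval_C]
  simp [Matrix.cons_val_zero, Matrix.cons_val_one, Matrix.head_cons, Matrix.cons_val_succ]
  ring

lemma psi_comp_rename : psi.comp (rename (Fin.castSucc : Fin 4 → Fin 5)) = Pmap := by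
  apply MvPolynomial.algHom_ext
  intro i
  fin_cases i <;> simp [psi, Pmap] <;> rfl

lemma rel_dvd_of_X0 : ∀ (N : ℕ) (f : MvPolynomial (Fin 5) ℂ),
    rel ∣ X 0 ^ N * f → rel ∣ f := by
  intro N
  induction N with
  | zero => intro f hf; simpa using hf
  | succ n ih =>
    intro f hf
    have h1 : rel ∣ X 0 ^ n * (X 0 * f) := by
      have : X (0 : Fin 5) ^ (n + 1) * f = X 0 ^ n * (X 0 * f) := by ring
      rwa [this] at hf
    have h2 : rel ∣ X (0 : Fin 5) * f := ih _ h1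
    obtain ⟨k, hk⟩ := h2
    have hx : X (0 : Fin 5) ∣ rel * k := ⟨f, hk.symm⟩
    rcases prime_X0.2.2 rel k hx with h | h
    · exact absurd h not_dvd_X0_rel
    · obtain ⟨k', rfl⟩ := h
      refine ⟨k', ?_⟩
      have hX0 : (X (0 : Fin 5) : MvPolynomial (Fin 5) ℂ) ≠ 0 := X_ne_zero 0
      apply mul_left_cancel₀ hX0
      rw [hk]; ring

/-- The kernel of `ψ` is the principal ideal generated by
`4y₃² − 4y₁³ − y₀³y₄ + 3y₀²y₁y₂`; consequently the invariant ring of the `ℂ⁺`-action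
on `Sym⁴(ℂ²)` (the image of `ψ`) is isomorphic to
`ℂ[y₀,…,y₄]/(4y₃² − 4y₁³ − y₀³y₄ + 3y₀²y₁y₂)`, the coordinate ring of a degree-6
hypersurface in `ℙ(1,2,2,3,3)`. -/
theorem psi_ker_eq_span :
    RingHom.ker psi = Ideal.span ({rel} : Set (MvPolynomial (Fin 5) ℂ)) ∧
    Nonempty
      ((MvPolynomial (Fin 5) ℂ ⧸ Ideal.span ({rel} : Set (MvPolynomial (Fin 5) ℂ)))
        ≃ₐ[ℂ] psi.range) := by
  have hker : RingHom.ker psi = Ideal.span ({rel} : Set (MvPolynomial (Fin 5) ℂ)) := by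
    apply le_antisymm
    · intro f hf
      rw [RingHom.mem_ker] at hf
      obtain ⟨N, q, g, h⟩ := elim_y4 f
      have h2 : psi (rename Fin.castSucc g) = 0 := by
        have h3 := congrArg psi h
        simp only [map_add, map_mul, map_pow, hf, psi_rel, mul_zero, zero_add] at h3
        simpa using h3.symm
      have hP : Pmap g = Pmap 0 := by
        rw [← psi_comp_rename]
        simpa using h2
      have hg : g = 0 := Pmap_injective hP
      rw [hg, map_zero, add_zero] at h
      rw [Ideal.mem_span_singleton]
      exact rel_dvd_of_X0 N f ⟨q, by rw [h]; ring⟩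
    · rw [Ideal.span_le, Set.singleton_subset_iff]
      exact psi_rel
  refine ⟨hker, ?_⟩
  have hsurj : Function.Surjective psi.rangeRestrict := psi.rangeRestrict_surjective
  have heq : RingHom.ker psi.rangeRestrict = Ideal.span ({rel} : Set (MvPolynomial (Fin 5) ℂ)) := by
    rw [← hker]
    ext x
    simp [RingHom.mem_ker, Subtype.ext_iff]
  exact ⟨heq ▸ Ideal.quotientKerAlgEquivOfSurjective hsurj⟩
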